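/- Let n be a positive integer and q = 11^n. The polynomial f_n(x) = Σ_{i=1}^{q−2} [ 4^{i+1}(2 − i) − 6^i ] x^i ∈ F_q[x] (coefficients computed in F_q, with the integer i acting via ℤ → F_q) satisfies f_n(x) ≡ ((2 − x)^{q−2} + 1)^{q−2} − 8 (mod x^q − x); in particular f_n is a permutation polynomial of F_q with Carlitz rank 2, and its weight is ω(f_n) = 11^n − 11^{n−1} − 4. -/

import Mathlib

open Polynomial Finset

set_option maxRecDepth 40000
set_option maxHeartbeats 1000000

noncomputable def carlitzChain {F : Type*} [Field F] (q : ℕ) (a : ℕ → F) : ℕ → F[X]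
  | 0 => C (a 0) * X + C (a 1)
  | n + 1 => carlitzChain q a n ^ (q - 2) + C (a (n + 2))

/-- `f` is congruent mod `X^q - X` to a Carlitz chain of length `n`. -/
def IsCarlitzRep {F : Type*} [Field F] (q : ℕ) (f : F[X]) (n : ℕ) : Prop :=
  ∃ a : ℕ → F, a 0 ≠ 0 ∧ (∀ i, 2 ≤ i → i ≤ n → a i ≠ 0) ∧
    (X ^ q - X : F[X]) ∣ f - carlitzChain q a n

/-- The Carlitz rank of a permutation polynomial. -/
noncomputable def carlitzRank {F : Type*} [Field F] (q : ℕ) (f : F[X]) : ℕ :=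
  sInf {n | IsCarlitzRep q f n}

/-- The weight: number of nonzero coefficients of the reduction of `f` mod `X^q - X`. -/
noncomputable def polyWeight {F : Type*} [Field F] (q : ℕ) (f : F[X]) : ℕ :=
  (f %ₘ (X ^ q - X)).support.card

/-- `ν_p` from the paper. -/
noncomputable def nuP (p : ℕ) [Fact p.Prime] : ℕ :=
  Finset.sup (Finset.univ.erase (1 : ZMod p)) fun γ =>
    ((Finset.Icc 1 (p - 2)).filter
      (fun i : ℕ => γ ^ (i + 1) = (i : ZMod p) * (1 - γ) + 1)).card

instance : Fact (Nat.Prime 11) := ⟨by norm_num⟩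

/-- **Example.** Let `q = 11^n` and `F = F_q`. The polynomial
`f_n(x) = ∑_{i=1}^{q-2} [4^{i+1}(2-i) - 6^i] x^i` satisfies
`f_n ≡ ((2-x)^{q-2} + 1)^{q-2} - 8 (mod x^q - x)`; it is a permutation polynomial of `F_q`
of Carlitz rank 2, and its weight is `11^n - 11^{n-1} - 4`. -/
lemma sumA {R : Type*} [CommRing R] (t : R) (M : ℕ) :
    (t - 1) * ∑ i ∈ Icc 1 M, t ^ i = t ^ (M + 1) - t := by
  induction M with
  | zero => simp
  | succ M ih =>
    rw [Finset.sum_Icc_succ_top (by omega)]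
    ring_nf
    ring_nf at ih
    linear_combination ih

lemma sumB {R : Type*} [CommRing R] (t : R) (M : ℕ) :
    (t - 1) * ∑ i ∈ Icc 1 M, (i : R) * t ^ i
      = (M : R) * t ^ (M + 1) - ∑ i ∈ Icc 1 M, t ^ i := by
  induction M with
  | zero => simp
  | succ M ih =>
    rw [Finset.sum_Icc_succ_top (a := 1) (b := M) (by omega),
      Finset.sum_Icc_succ_top (a := 1) (b := M) (by omega)]
    push_cast
    push_cast at ih
    linear_combination ih

lemma sumC {R : Type*} [CommRing R] (M : ℕ) :
    (2 : R) * ∑ i ∈ Icc 1 M, (i : R) = (M : R) * ((M : R) + 1) := by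
  induction M with
  | zero => simp
  | succ M ih =>
    rw [Finset.sum_Icc_succ_top (by omega)]
    push_cast
    push_cast at ih
    linear_combination ih

def dcoef (i : ℕ) : ZMod 11 := 4 ^ (i + 1) * (2 - (i : ZMod 11)) - 6 ^ i

lemma dcoef_periodic (i : ℕ) : dcoef (i + 110) = dcoef i := by
  unfold dcoef
  have h4 : (4 : ZMod 11) ^ 110 = 1 := by
    rw [show (110:ℕ) = 10 * 11 from rfl, pow_mul, show (4:ZMod 11)^10 = 1 by decide, one_pow]
  have h6 : (6 : ZMod 11) ^ 110 = 1 := by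
    rw [show (110:ℕ) = 10 * 11 from rfl, pow_mul, show (6:ZMod 11)^10 = 1 by decide, one_pow]
  rw [show i + 110 + 1 = (i + 1) + 110 by ring, pow_add (4 : ZMod 11) (i+1) 110,
    pow_add (6 : ZMod 11) i 110, h4, h6]
  have h11 : (11 : ZMod 11) = 0 := by decide
  push_cast
  linear_combination (-(40 : ZMod 11) * 4 ^ i) * h11

lemma dcoef_periodic' (i k : ℕ) : dcoef (i + 110 * k) = dcoef i := by
  induction k with
  | zero => simp
  | succ k ih => rw [show i + 110 * (k+1) = (i + 110 * k) + 110 by ring, dcoef_periodic, ih]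

def indz (i : ℕ) : ℕ := if dcoef i = 0 then 1 else 0

lemma indz_block : ∑ x ∈ range 110, indz (x + 10) = 10 := by decide

lemma indz_count (m : ℕ) :
    ∑ i ∈ range (110 * m + 10), indz i = 10 * m + 3 := by
  induction m with
  | zero => decide
  | succ m ih =>
    rw [show 110 * (m + 1) + 10 = (110 * m + 10) + 110 by ring, Finset.sum_range_add, ih]
    have h : ∀ x, indz (110 * m + 10 + x) = indz (x + 10) := by
      intro x
      rw [show 110 * m + 10 + x = (x + 10) + 110 * m by ring]
      unfold indz
      rw [dcoef_periodic']
    simp only [h]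
    rw [indz_block]
    ring

lemma pow11 (k : ℕ) : ∃ m, 11 ^ k = 10 * m + 1 := by
  induction k with
  | zero => exact ⟨0, rfl⟩
  | succ k ih =>
    obtain ⟨m, hm⟩ := ih
    exact ⟨11 * m + 1, by rw [pow_succ, hm]; ring⟩

theorem main_aux {F : Type*} [Field F] [Fintype F] [CharP F 11] (n : ℕ) (hn : 0 < n)
    (hcard : Fintype.card F = 11 ^ n) (f : F[X])
    (hf : f = ∑ i ∈ Finset.Icc (1 : ℕ) (11 ^ n - 2),
        C ((4 : F) ^ (i + 1) * (2 - (i : F)) - 6 ^ i) * X ^ i) :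
    (X ^ 11 ^ n - X : F[X]) ∣
        f - (((C 2 - X) ^ (11 ^ n - 2) + 1) ^ (11 ^ n - 2) - C 8) ∧
      Function.Bijective (fun x : F => f.eval x) ∧
      carlitzRank (11 ^ n) f = 2 ∧
      polyWeight (11 ^ n) f = 11 ^ n - 11 ^ (n - 1) - 4 := by

  classical
  -- basic facts
  have h11 : (11 : F) = 0 := by
    have := CharP.cast_eq_zero F 11
    exact_mod_cast this
  have hq11 : (11:ℕ) ≤ 11 ^ n := by
    calc (11:ℕ) = 11 ^ 1 := (pow_one 11).symm
    _ ≤ 11 ^ n := Nat.pow_le_pow_right (by norm_num) hn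
  have hnz : ∀ m : ℕ, ¬ (11 ∣ m) → (m : F) ≠ 0 :=
    fun m hm h => hm ((CharP.cast_eq_zero_iff F 11 m).mp h)
  have h2ne : (2:F) ≠ 0 := by have := hnz 2 (by norm_num); exact_mod_cast this
  have h3ne : (3:F) ≠ 0 := by have := hnz 3 (by norm_num); exact_mod_cast this
  have h4ne : (4:F) ≠ 0 := by have := hnz 4 (by norm_num); exact_mod_cast this
  have h5ne : (5:F) ≠ 0 := by have := hnz 5 (by norm_num); exact_mod_cast this
  have h6ne : (6:F) ≠ 0 := by have := hnz 6 (by norm_num); exact_mod_cast this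
  have h7ne : (7:F) ≠ 0 := by have := hnz 7 (by norm_num); exact_mod_cast this
  have h8ne : (8:F) ≠ 0 := by have := hnz 8 (by norm_num); exact_mod_cast this
  have hM1 : 11 ^ n - 2 + 1 = 11 ^ n - 1 := by omega
  have hunit : ∀ t : F, t ≠ 0 → t ^ (11 ^ n - 1) = 1 := by
    intro t ht
    have := FiniteField.pow_card_sub_one_eq_one t ht
    rwa [hcard] at this
  have hpow : ∀ x : F, x ^ (11 ^ n - 2) = x⁻¹ := by
    intro x
    rcases eq_or_ne x 0 with rfl | hx
    · rw [zero_pow (by omega), inv_zero]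
    · have hmul : x * x ^ (11 ^ n - 2) = 1 := by
        rw [← pow_succ', hM1]
        exact hunit x hx
      exact (inv_eq_of_mul_eq_one_right hmul).symm
  have hMcast : ((11 ^ n - 2 : ℕ) : F) = -2 := by
    rw [Nat.cast_sub (by omega)]
    push_cast
    rw [h11, zero_pow hn.ne']
    ring
  have hS1 : ∀ t : F, t ≠ 0 → t ≠ 1 → ∑ i ∈ Icc (1:ℕ) (11 ^ n - 2), t ^ i = -1 := by
    intro t ht ht1
    have hA := sumA t (11 ^ n - 2)
    rw [hM1, hunit t ht] at hA
    have h2' : (t - 1) * ∑ i ∈ Icc (1:ℕ) (11 ^ n - 2), t ^ i = (t - 1) * (-1) := by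
      rw [hA]; ring
    exact mul_left_cancel₀ (sub_ne_zero.mpr ht1) h2'
  have hS2 : ∀ t : F, t ≠ 0 → t ≠ 1 →
      (t - 1) * ∑ i ∈ Icc (1:ℕ) (11 ^ n - 2), (i:F) * t ^ i = -1 := by
    intro t ht ht1
    have hB := sumB t (11 ^ n - 2)
    rw [hM1, hunit t ht, hMcast, hS1 t ht ht1] at hB
    rw [hB]; ring
  have hone : ∑ i ∈ Icc (1:ℕ) (11 ^ n - 2), (1:F) ^ i = -2 := by
    simp only [one_pow]
    rw [Finset.sum_const, Nat.card_Icc, nsmul_eq_mul, mul_one,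
      show 11 ^ n - 2 + 1 - 1 = 11 ^ n - 2 by omega, hMcast]
  have honeT : ∑ i ∈ Icc (1:ℕ) (11 ^ n - 2), (i:F) * (1:F) ^ i = 1 := by
    simp only [one_pow, mul_one]
    have hC := sumC (R := F) (11 ^ n - 2)
    rw [hMcast] at hC
    have : (2:F) * ∑ i ∈ Icc (1:ℕ) (11 ^ n - 2), (i:F) = 2 * 1 := by rw [hC]; ring
    exact mul_left_cancel₀ h2ne this
  have hsplit : ∀ x : F, eval x f =
      8 * (∑ i ∈ Icc (1:ℕ) (11 ^ n - 2), (4*x) ^ i)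
      - 4 * (∑ i ∈ Icc (1:ℕ) (11 ^ n - 2), (i:F) * (4*x) ^ i)
      - ∑ i ∈ Icc (1:ℕ) (11 ^ n - 2), (6*x) ^ i := by
    intro x
    rw [hf, eval_finset_sum, Finset.mul_sum, Finset.mul_sum, ← Finset.sum_sub_distrib,
      ← Finset.sum_sub_distrib]
    refine Finset.sum_congr rfl fun i _ => ?_
    simp only [eval_mul, eval_pow, eval_C, eval_X]
    ring
  -- values of the rational function
  have hg0 : ((2 - (0:F))⁻¹ + 1)⁻¹ - 8 = 0 := by
    rw [show (2 - (0:F)) = 2 by ring,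
      show (2:F)⁻¹ = 6 from inv_eq_of_mul_eq_one_right (by linear_combination h11),
      show (6:F) + 1 = 7 by norm_num,
      show (7:F)⁻¹ = 8 from inv_eq_of_mul_eq_one_right (by linear_combination 5*h11)]
    ring
  have hg1 : ((2 - (1:F))⁻¹ + 1)⁻¹ - 8 = 9 := by
    rw [show (2 - (1:F)) = 1 by ring, inv_one, show (1:F) + 1 = 2 by norm_num,
      show (2:F)⁻¹ = 6 from inv_eq_of_mul_eq_one_right (by linear_combination h11)]
    linear_combination -h11
  have hg2 : ((2 - (2:F))⁻¹ + 1)⁻¹ - 8 = 4 := by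
    rw [show (2 - (2:F)) = 0 by ring, inv_zero, show (0:F) + 1 = 1 by norm_num, inv_one]
    linear_combination -h11
  have hg3 : ((2 - (3:F))⁻¹ + 1)⁻¹ - 8 = 3 := by
    rw [show (2 - (3:F)) = -1 by ring,
      show ((-1:F))⁻¹ = -1 from inv_eq_of_mul_eq_one_right (by ring),
      show (-1:F) + 1 = 0 by ring, inv_zero]
    linear_combination -h11
  have hg4 : ((2 - (4:F))⁻¹ + 1)⁻¹ - 8 = 5 := by
    rw [show (2 - (4:F)) = -2 by ring,
      show ((-2:F))⁻¹ = 5 from inv_eq_of_mul_eq_one_right (by linear_combination -h11),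
      show (5:F) + 1 = 6 by norm_num,
      show (6:F)⁻¹ = 2 from inv_eq_of_mul_eq_one_right (by linear_combination h11)]
    linear_combination -h11
  have hg5 : ((2 - (5:F))⁻¹ + 1)⁻¹ - 8 = 10 := by
    rw [show (2 - (5:F)) = -3 by ring,
      show ((-3:F))⁻¹ = 7 from inv_eq_of_mul_eq_one_right (by linear_combination -2*h11),
      show (7:F) + 1 = 8 by norm_num,
      show (8:F)⁻¹ = 7 from inv_eq_of_mul_eq_one_right (by linear_combination 5*h11)]
    linear_combination -h11
  have hg6 : ((2 - (6:F))⁻¹ + 1)⁻¹ - 8 = 8 := by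
    rw [show (2 - (6:F)) = -4 by ring,
      show ((-4:F))⁻¹ = 8 from inv_eq_of_mul_eq_one_right (by linear_combination -3*h11),
      show (8:F) + 1 = 9 by norm_num,
      show (9:F)⁻¹ = 5 from inv_eq_of_mul_eq_one_right (by linear_combination 4*h11)]
    linear_combination -h11
  have hg7 : ((2 - (7:F))⁻¹ + 1)⁻¹ - 8 = 7 := by
    rw [show (2 - (7:F)) = -5 by ring,
      show ((-5:F))⁻¹ = 2 from inv_eq_of_mul_eq_one_right (by linear_combination -h11),
      show (2:F) + 1 = 3 by norm_num,
      show (3:F)⁻¹ = 4 from inv_eq_of_mul_eq_one_right (by linear_combination h11)]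
    linear_combination -h11
  have hg8 : ((2 - (8:F))⁻¹ + 1)⁻¹ - 8 = 2 := by
    rw [show (2 - (8:F)) = -6 by ring,
      show ((-6:F))⁻¹ = 9 from inv_eq_of_mul_eq_one_right (by linear_combination -5*h11),
      show (9:F) + 1 = 10 by norm_num,
      show (10:F)⁻¹ = 10 from inv_eq_of_mul_eq_one_right (by linear_combination 9*h11)]
    ring
  -- the central evaluation identity
  have hEval : ∀ x : F, eval x f = ((2 - x)⁻¹ + 1)⁻¹ - 8 := by
    intro x
    by_cases hx0 : x = 0
    · subst hx0
      rw [hsplit]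
      have hz : ∀ c : F, ∑ i ∈ Icc (1:ℕ) (11 ^ n - 2), (c * 0) ^ i = 0 := by
        intro c
        refine Finset.sum_eq_zero fun i hi => ?_
        rw [mul_zero, zero_pow]
        simp only [Finset.mem_Icc] at hi
        omega
      have hz2 : ∑ i ∈ Icc (1:ℕ) (11 ^ n - 2), (i:F) * ((4:F) * 0) ^ i = 0 := by
        refine Finset.sum_eq_zero fun i hi => ?_
        rw [mul_zero, zero_pow, mul_zero]
        simp only [Finset.mem_Icc] at hi
        omega
      rw [hz 4, hz 6, hz2, hg0]
      ring
    by_cases hx2 : x = 2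
    · subst hx2
      rw [hsplit, show (6:F) * 2 = 1 by linear_combination h11, hone,
        show (4:F) * 2 = 8 by norm_num]
      have h8ne1 : (8:F) ≠ 1 := by
        intro h; exact h7ne (by linear_combination h)
      rw [hS1 8 h8ne h8ne1]
      have hT : ∑ i ∈ Icc (1:ℕ) (11 ^ n - 2), (i:F) * (8:F) ^ i = 3 := by
        have h78 := hS2 8 h8ne h8ne1
        have h7' : (8:F) - 1 ≠ 0 := by
          intro h; exact h7ne (by linear_combination h)
        have : ((8:F) - 1) * ∑ i ∈ Icc (1:ℕ) (11 ^ n - 2), (i:F) * (8:F) ^ i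
            = ((8:F) - 1) * 3 := by
          rw [h78]; linear_combination -2*h11
        exact mul_left_cancel₀ h7' this
      rw [hT, hg2]
      linear_combination -2*h11
    by_cases hx3 : x = 3
    · subst hx3
      rw [hsplit, show (4:F) * 3 = 1 by linear_combination h11,
        show (6:F) * 3 = 7 by linear_combination h11, hone, honeT]
      have h7ne1 : (7:F) ≠ 1 := by
        intro h; exact h6ne (by linear_combination h)
      rw [hS1 7 h7ne h7ne1, hg3]
      linear_combination -2*h11
    · -- generic case
      have h4x : (4:F) * x ≠ 0 := mul_ne_zero h4ne hx0
      have h4x1 : (4:F) * x - 1 ≠ 0 := by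
        intro h
        have h' : (4:F) * (x - 3) = 0 := by linear_combination h - h11
        rcases mul_eq_zero.mp h' with h'' | h''
        · exact h4ne h''
        · exact hx3 (by linear_combination h'')
      have h4x1' : (4:F) * x ≠ 1 := by
        intro h; exact h4x1 (by rw [h]; ring)
      have h6x : (6:F) * x ≠ 0 := mul_ne_zero h6ne hx0
      have h6x1 : (6:F) * x ≠ 1 := by
        intro h
        have h' : (6:F) * (x - 2) = 0 := by linear_combination h - h11
        rcases mul_eq_zero.mp h' with h'' | h''
        · exact h6ne h''
        · exact hx2 (by linear_combination h'')
      rw [hsplit, hS1 _ h4x h4x1', hS1 _ h6x h6x1]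
      have hT := hS2 (4*x) h4x h4x1'
      have hTv : ∑ i ∈ Icc (1:ℕ) (11 ^ n - 2), (i:F) * ((4:F)*x) ^ i = -((4*x - 1)⁻¹) := by
        have : ((4:F)*x - 1) * (-((4*x-1)⁻¹)) = -1 := by
          rw [mul_neg, mul_inv_cancel₀ h4x1]
        exact mul_left_cancel₀ h4x1 (by rw [hT, this])
      rw [hTv]
      have h2x : (2:F) - x ≠ 0 := sub_ne_zero.mpr (fun h => hx2 h.symm)
      have h3x : (3:F) - x ≠ 0 := sub_ne_zero.mpr (fun h => hx3 h.symm)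
      have hstep : (2 - x)⁻¹ + 1 = (3 - x) * (2 - x)⁻¹ := by
        field_simp
        ring
      rw [hstep, mul_inv, inv_inv]
      field_simp
      ring_nf
      linear_combination h11
  -- claim 1 : divisibility
  have hcardpow : ∀ x : F, x ^ 11 ^ n = x := by
    intro x
    have := FiniteField.pow_card x
    rwa [hcard] at this
  have hgeval : ∀ x : F,
      eval x (((C 2 - X) ^ (11 ^ n - 2) + 1) ^ (11 ^ n - 2) - C 8 : F[X])
        = ((2 - x)⁻¹ + 1)⁻¹ - 8 := by
    intro x
    simp only [eval_sub, eval_add, eval_pow, eval_one, eval_C, eval_X]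
    rw [hpow, hpow]
  have hmonic : (X ^ 11 ^ n - X : F[X]).Monic := by
    have he : (X ^ 11 ^ n - X : F[X]) = X ^ ((11 ^ n - 1) + 1) - X := by
      rw [show 11 ^ n - 1 + 1 = 11 ^ n by omega]
    rw [he]
    refine monic_X_pow_sub ?_
    refine lt_of_le_of_lt degree_X_le ?_
    exact_mod_cast (show (1:ℕ) < 11 ^ n - 1 + 1 by omega)
  have hdeg2 : (X ^ 11 ^ n - X : F[X]).degree = ((11 ^ n : ℕ) : WithBot ℕ) := by
    rw [degree_eq_natDegree hmonic.ne_zero,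
      FiniteField.X_pow_card_sub_X_natDegree_eq F (by omega : 1 < 11 ^ n)]
  have hdvd : (X ^ 11 ^ n - X : F[X]) ∣
      f - (((C 2 - X) ^ (11 ^ n - 2) + 1) ^ (11 ^ n - 2) - C 8) := by
    rw [← Polynomial.modByMonic_eq_zero_iff_dvd hmonic]
    by_contra hr
    have hreval : ∀ x : F,
        eval x ((f - (((C 2 - X) ^ (11 ^ n - 2) + 1) ^ (11 ^ n - 2) - C 8)) %ₘ
          (X ^ 11 ^ n - X)) = 0 := by
      intro x
      have hdecomp := Polynomial.modByMonic_add_div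
        (f - (((C 2 - X) ^ (11 ^ n - 2) + 1) ^ (11 ^ n - 2) - C 8)) (X ^ 11 ^ n - X)
      have h0 := congrArg (eval x) hdecomp
      rw [eval_add, eval_mul] at h0
      have hXq : eval x (X ^ 11 ^ n - X : F[X]) = 0 := by
        rw [eval_sub, eval_pow, eval_X, hcardpow x]; ring
      rw [hXq, zero_mul, add_zero] at h0
      rw [h0, eval_sub, hEval, hgeval]
      ring
    apply hr
    refine Polynomial.eq_zero_of_natDegree_lt_card_of_eval_eq_zero _
      Function.injective_id hreval ?_
    rw [hcard]
    have hdm := Polynomial.degree_modByMonic_lt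
      (f - (((C 2 - X) ^ (11 ^ n - 2) + 1) ^ (11 ^ n - 2) - C 8)) hmonic
    rw [hdeg2] at hdm
    exact (Polynomial.natDegree_lt_iff_degree_lt hr).mpr hdm
  refine ⟨hdvd, ?_, ?_, ?_⟩
  -- claim 2 : bijectivity
  · rw [← Finite.injective_iff_bijective]
    intro a b hab
    simp only [hEval] at hab
    have h1 : ((2 - a)⁻¹ + 1)⁻¹ = ((2 - b)⁻¹ + 1)⁻¹ := by linear_combination hab
    have h2' := inv_injective h1
    have h3' : (2 - a)⁻¹ = (2 - b)⁻¹ := by linear_combination h2'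
    have h4' := inv_injective h3'
    linear_combination -h4'
  -- claim 3 : Carlitz rank
  · have hfun_of_dvd : ∀ p : F[X], (X ^ 11 ^ n - X : F[X]) ∣ f - p →
        ∀ x : F, eval x f = eval x p := by
      rintro p ⟨c, hc⟩ x
      have h0 := congrArg (eval x) hc
      simp only [eval_sub, eval_mul, eval_pow, eval_X] at h0
      rw [hcardpow x] at h0
      linear_combination h0
    have hrep2 : IsCarlitzRep (11 ^ n) f 2 := by
      refine ⟨fun i => if i = 0 then -1 else if i = 1 then 2 else if i = 2 then 1 else -8,
        by norm_num, by intro i h2i hi2; interval_cases i <;> norm_num, ?_⟩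
      have hchain : carlitzChain (11 ^ n)
          (fun i => if i = 0 then (-1:F) else if i = 1 then 2 else if i = 2 then 1 else -8) 2
          = ((C 2 - X) ^ (11 ^ n - 2) + 1) ^ (11 ^ n - 2) - C 8 := by
        show ((C (-1:F) * X + C 2) ^ (11 ^ n - 2) + C 1) ^ (11 ^ n - 2) + C (-8) = _
        simp only [map_neg, map_one]
        ring
      rw [hchain]
      exact hdvd
    have hnot0 : ¬ IsCarlitzRep (11 ^ n) f 0 := by
      rintro ⟨a, ha0, -, hdvd0⟩
      have he := hfun_of_dvd _ hdvd0
      have e0 := he 0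
      have e2 := he 2
      have e3 := he 3
      rw [hEval] at e0 e2 e3
      simp only [carlitzChain, eval_add, eval_mul, eval_C, eval_X] at e0 e2 e3
      rw [hg0] at e0
      rw [hg2] at e2
      rw [hg3] at e3
      exact h5ne (by linear_combination e0 - 3*e2 + 2*e3 + h11)
    have hnot1 : ¬ IsCarlitzRep (11 ^ n) f 1 := by
      rintro ⟨a, ha0, -, hdvd1⟩
      have he := hfun_of_dvd _ hdvd1
      have heq : ∀ x : F, ((2 - x)⁻¹ + 1)⁻¹ - 8 = (a 0 * x + a 1)⁻¹ + a 2 := by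
        intro x
        have h0 := he x
        simp only [carlitzChain, eval_add, eval_pow, eval_mul, eval_C, eval_X] at h0
        rw [hpow] at h0
        rw [hEval x] at h0
        exact h0
      have hkey : ∀ x : F, a 0 * x + a 1 ≠ 0 →
          (((2 - x)⁻¹ + 1)⁻¹ - 8 - a 2) * (a 0 * x + a 1) = 1 := by
        intro x hx
        rw [heq x]
        rw [show (a 0 * x + a 1)⁻¹ + a 2 - a 2 = (a 0 * x + a 1)⁻¹ by ring]
        exact inv_mul_cancel₀ hx
      have hroot : ∀ x y : F, a 0 * x + a 1 = 0 → a 0 * y + a 1 = 0 → x = y := by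
        intro x y hx hy
        have h0 : a 0 * (x - y) = 0 := by linear_combination hx - hy
        rcases mul_eq_zero.mp h0 with h' | h'
        · exact absurd h' ha0
        · exact sub_eq_zero.mp h'
      have hne2 : ∀ x y : F, x - y ≠ 0 → a 0 * x + a 1 = 0 → a 0 * y + a 1 = 0 → False := by
        intro x y hxy hx hy
        exact hxy (by linear_combination hroot x y hx hy)
      have hwA : a 0 * (0:F) + a 1 ≠ 0 → a 0 * (1:F) + a 1 ≠ 0 → a 0 * (2:F) + a 1 ≠ 0 →
          a 2 = 1 := by
        intro p0 p1 p2
        have e0 := hkey 0 p0; rw [hg0] at e0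
        have e1 := hkey 1 p1; rw [hg1] at e1
        have e2 := hkey 2 p2; rw [hg2] at e2
        have hlin : (-14 : F) * a 2 = -36 := by
          linear_combination (-((9:F) - a 2)*((4:F) - a 2)) * e0
            - ((0:F) - a 2)*((9:F) - a 2) * e2
            + 2*((0:F) - a 2)*((4:F) - a 2) * e1
        have h14 : (-14:F) ≠ 0 := by
          intro h; exact h3ne (by linear_combination -h - h11)
        refine mul_left_cancel₀ h14 ?_
        rw [hlin]
        linear_combination -2*h11
      have hwB : a 0 * (3:F) + a 1 ≠ 0 → a 0 * (4:F) + a 1 ≠ 0 → a 0 * (5:F) + a 1 ≠ 0 →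
          a 2 = 2 := by
        intro p0 p1 p2
        have e0 := hkey 3 p0; rw [hg3] at e0
        have e1 := hkey 4 p1; rw [hg4] at e1
        have e2 := hkey 5 p2; rw [hg5] at e2
        have hlin : (3 : F) * a 2 = -5 := by
          linear_combination (-((5:F) - a 2)*((10:F) - a 2)) * e0
            - ((3:F) - a 2)*((5:F) - a 2) * e2
            + 2*((3:F) - a 2)*((10:F) - a 2) * e1
        refine mul_left_cancel₀ h3ne ?_
        rw [hlin]
        linear_combination -h11
      have hwC : a 0 * (6:F) + a 1 ≠ 0 → a 0 * (7:F) + a 1 ≠ 0 → a 0 * (8:F) + a 1 ≠ 0 →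
          a 2 = 4 := by
        intro p0 p1 p2
        have e0 := hkey 6 p0; rw [hg6] at e0
        have e1 := hkey 7 p1; rw [hg7] at e1
        have e2 := hkey 8 p2; rw [hg8] at e2
        have hlin : (-4 : F) * a 2 = -38 := by
          linear_combination (-((7:F) - a 2)*((2:F) - a 2)) * e0
            - ((8:F) - a 2)*((7:F) - a 2) * e2
            + 2*((8:F) - a 2)*((2:F) - a 2) * e1
        have h4' : (-4:F) ≠ 0 := fun h => h4ne (by linear_combination -h)
        refine mul_left_cancel₀ h4' ?_
        rw [hlin]
        linear_combination -2*h11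
      have extract : ∀ p q r : F,
          ¬(a 0 * p + a 1 ≠ 0 ∧ a 0 * q + a 1 ≠ 0 ∧ a 0 * r + a 1 ≠ 0) →
          (a 0 * p + a 1 = 0 ∨ a 0 * q + a 1 = 0 ∨ a 0 * r + a 1 = 0) := by
        intro p q r h
        by_contra h'
        push_neg at h'
        exact h ⟨h'.1, h'.2.1, h'.2.2⟩
      by_cases hA : a 0 * (0:F) + a 1 ≠ 0 ∧ a 0 * (1:F) + a 1 ≠ 0 ∧ a 0 * (2:F) + a 1 ≠ 0
      · by_cases hB : a 0 * (3:F) + a 1 ≠ 0 ∧ a 0 * (4:F) + a 1 ≠ 0 ∧ a 0 * (5:F) + a 1 ≠ 0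
        · have g1 := hwA hA.1 hA.2.1 hA.2.2
          have g2 := hwB hB.1 hB.2.1 hB.2.2
          exact one_ne_zero (α := F) (by linear_combination g1 - g2)
        · by_cases hC : a 0 * (6:F) + a 1 ≠ 0 ∧ a 0 * (7:F) + a 1 ≠ 0 ∧ a 0 * (8:F) + a 1 ≠ 0
          · have g1 := hwA hA.1 hA.2.1 hA.2.2
            have g3 := hwC hC.1 hC.2.1 hC.2.2
            exact h3ne (by linear_combination g1 - g3)
          · rcases extract _ _ _ hB with h | h | h
            · rcases extract _ _ _ hC with h' | h' | h'
              · exact hne2 _ _ (fun hs => h3ne (by linear_combination -hs)) h h'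
              · exact hne2 _ _ (fun hs => h4ne (by linear_combination -hs)) h h'
              · exact hne2 _ _ (fun hs => h5ne (by linear_combination -hs)) h h'
            · rcases extract _ _ _ hC with h' | h' | h'
              · exact hne2 _ _ (fun hs => h2ne (by linear_combination -hs)) h h'
              · exact hne2 _ _ (fun hs => h3ne (by linear_combination -hs)) h h'
              · exact hne2 _ _ (fun hs => h4ne (by linear_combination -hs)) h h'
            · rcases extract _ _ _ hC with h' | h' | h'
              · exact hne2 _ _ (fun hs => (one_ne_zero (α := F)) (by linear_combination -hs)) h h'
              · exact hne2 _ _ (fun hs => h2ne (by linear_combination -hs)) h h'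
              · exact hne2 _ _ (fun hs => h3ne (by linear_combination -hs)) h h'
      · by_cases hB : a 0 * (3:F) + a 1 ≠ 0 ∧ a 0 * (4:F) + a 1 ≠ 0 ∧ a 0 * (5:F) + a 1 ≠ 0
        · by_cases hC : a 0 * (6:F) + a 1 ≠ 0 ∧ a 0 * (7:F) + a 1 ≠ 0 ∧ a 0 * (8:F) + a 1 ≠ 0
          · have g2 := hwB hB.1 hB.2.1 hB.2.2
            have g3 := hwC hC.1 hC.2.1 hC.2.2
            exact h2ne (by linear_combination g2 - g3)
          · rcases extract _ _ _ hA with h | h | h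
            · rcases extract _ _ _ hC with h' | h' | h'
              · exact hne2 _ _ (fun hs => h6ne (by linear_combination -hs)) h h'
              · exact hne2 _ _ (fun hs => h7ne (by linear_combination -hs)) h h'
              · exact hne2 _ _ (fun hs => h8ne (by linear_combination -hs)) h h'
            · rcases extract _ _ _ hC with h' | h' | h'
              · exact hne2 _ _ (fun hs => h5ne (by linear_combination -hs)) h h'
              · exact hne2 _ _ (fun hs => h6ne (by linear_combination -hs)) h h'
              · exact hne2 _ _ (fun hs => h7ne (by linear_combination -hs)) h h'
            · rcases extract _ _ _ hC with h' | h' | h'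
              · exact hne2 _ _ (fun hs => h4ne (by linear_combination -hs)) h h'
              · exact hne2 _ _ (fun hs => h5ne (by linear_combination -hs)) h h'
              · exact hne2 _ _ (fun hs => h6ne (by linear_combination -hs)) h h'
        · rcases extract _ _ _ hA with h | h | h
          · rcases extract _ _ _ hB with h' | h' | h'
            · exact hne2 _ _ (fun hs => h3ne (by linear_combination -hs)) h h'
            · exact hne2 _ _ (fun hs => h4ne (by linear_combination -hs)) h h'
            · exact hne2 _ _ (fun hs => h5ne (by linear_combination -hs)) h h'
          · rcases extract _ _ _ hB with h' | h' | h'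
            · exact hne2 _ _ (fun hs => h2ne (by linear_combination -hs)) h h'
            · exact hne2 _ _ (fun hs => h3ne (by linear_combination -hs)) h h'
            · exact hne2 _ _ (fun hs => h4ne (by linear_combination -hs)) h h'
          · rcases extract _ _ _ hB with h' | h' | h'
            · exact hne2 _ _ (fun hs => (one_ne_zero (α := F)) (by linear_combination -hs)) h h'
            · exact hne2 _ _ (fun hs => h2ne (by linear_combination -hs)) h h'
            · exact hne2 _ _ (fun hs => h3ne (by linear_combination -hs)) h h'
    have hmem2 : 2 ∈ {k | IsCarlitzRep (11 ^ n) f k} := hrep2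
    unfold carlitzRank
    refine le_antisymm (Nat.sInf_le hmem2) ?_
    by_contra hlt
    push_neg at hlt
    have hmemInf := Nat.sInf_mem (s := {k | IsCarlitzRep (11 ^ n) f k}) ⟨2, hmem2⟩
    have hk : sInf {k | IsCarlitzRep (11 ^ n) f k} = 0 ∨
        sInf {k | IsCarlitzRep (11 ^ n) f k} = 1 := by omega
    rcases hk with hk | hk <;> rw [hk] at hmemInf
    · exact hnot0 hmemInf
    · exact hnot1 hmemInf
  -- claim 4 : weight
  · have hdegf : f.degree < (X ^ 11 ^ n - X : F[X]).degree := by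
      rw [hdeg2, hf]
      refine lt_of_le_of_lt (Polynomial.degree_sum_le _ _) ?_
      refine lt_of_le_of_lt (Finset.sup_le fun i hi => ?_)
        (show ((11 ^ n - 2 : ℕ) : WithBot ℕ) < ((11 ^ n : ℕ) : WithBot ℕ) by
          exact_mod_cast (show 11 ^ n - 2 < 11 ^ n by omega))
      refine le_trans (Polynomial.degree_C_mul_X_pow_le _ _) ?_
      simp only [Finset.mem_Icc] at hi
      exact_mod_cast Nat.cast_le.mpr hi.2
    have hmod : f %ₘ (X ^ 11 ^ n - X) = f :=
      (Polynomial.modByMonic_eq_self_iff hmonic).mpr hdegf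
    have hcoeff : ∀ j : ℕ, f.coeff j =
        if j ∈ Icc (1:ℕ) (11 ^ n - 2) then (4:F) ^ (j+1) * (2 - (j:F)) - 6 ^ j else 0 := by
      intro j
      rw [hf, Polynomial.finset_sum_coeff]
      simp_rw [Polynomial.C_mul_X_pow_eq_monomial, Polynomial.coeff_monomial]
      rw [Finset.sum_ite_eq' (Icc (1:ℕ) (11 ^ n - 2)) j
        (fun i => (4:F) ^ (i+1) * (2 - (i:F)) - 6 ^ i)]
    have hphi : ∀ i : ℕ, (4:F) ^ (i+1) * (2 - (i:F)) - 6 ^ i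
        = ZMod.castHom (dvd_refl 11) F (dcoef i) := by
      intro i
      unfold dcoef
      rw [map_sub, map_mul, map_pow, map_pow, map_sub, map_ofNat, map_ofNat, map_ofNat,
        map_natCast]
    have hinj : Function.Injective (ZMod.castHom (dvd_refl 11) F) :=
      (ZMod.castHom (dvd_refl 11) F).injective
    have hsupp : f.support = (Icc (1:ℕ) (11 ^ n - 2)).filter fun i => dcoef i ≠ 0 := by
      ext j
      rw [Polynomial.mem_support_iff, hcoeff j, Finset.mem_filter]
      split_ifs with hj
      · rw [hphi]
        constructor
        · intro h
          exact ⟨hj, fun h0 => h (by rw [h0, map_zero])⟩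
        · intro ⟨_, h⟩ h0
          exact h (hinj (by rw [h0, map_zero]))
      · constructor
        · intro h; exact absurd rfl h
        · intro ⟨h, _⟩; exact absurd h hj
    have hfilter := Finset.card_filter_add_card_filter_not
      (s := Icc (1:ℕ) (11 ^ n - 2)) (p := fun i => dcoef i = 0)
    obtain ⟨m, hm⟩ := pow11 (n - 1)
    have h11n : 11 ^ n = 11 * 11 ^ (n - 1) := by
      rw [← pow_succ']
      congr 1
      omega
    have hZ : ((Icc (1:ℕ) (11 ^ n - 2)).filter fun i => dcoef i = 0).card = 11 ^ (n-1) + 2 := by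
      rw [Finset.card_filter]
      have hsum : ∑ i ∈ Icc (1:ℕ) (11 ^ n - 2), (if dcoef i = 0 then 1 else 0)
          = ∑ i ∈ Finset.range (11 ^ n - 1), indz i := by
        rw [show Icc (1:ℕ) (11 ^ n - 2) = Ico 1 (11 ^ n - 1) by
          rw [show 11 ^ n - 1 = (11 ^ n - 2) + 1 by omega, Finset.Ico_add_one_right_eq_Icc]]
        rw [Finset.range_eq_Ico,
          ← Finset.sum_Ico_consecutive _ (by omega : 0 ≤ 1) (by omega : 1 ≤ 11 ^ n - 1)]
        have h0 : ∑ i ∈ Ico 0 1, indz i = 0 := by decide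
        rw [h0, zero_add]
        rfl
      rw [hsum, show 11 ^ n - 1 = 110 * m + 10 by omega, indz_count]
      omega
    unfold polyWeight
    rw [hmod, hsupp]
    have hIcc : (Icc (1:ℕ) (11 ^ n - 2)).card = 11 ^ n - 2 := by
      rw [Nat.card_Icc]
      omega
    have hcard' : ((Icc (1:ℕ) (11 ^ n - 2)).filter fun i => dcoef i ≠ 0).card
        = ((Icc (1:ℕ) (11 ^ n - 2)).filter fun i => ¬ dcoef i = 0).card := by rfl
    omega


theorem example_eleven (n : ℕ) (hn : 0 < n) (f : Polynomial (GaloisField 11 n))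
    (hf : f = ∑ i ∈ Finset.Icc (1 : ℕ) (11 ^ n - 2),
        C ((4 : GaloisField 11 n) ^ (i + 1) * (2 - (i : GaloisField 11 n)) - 6 ^ i) * X ^ i) :
    (X ^ 11 ^ n - X : Polynomial (GaloisField 11 n)) ∣
        f - (((C 2 - X) ^ (11 ^ n - 2) + 1) ^ (11 ^ n - 2) - C 8) ∧
      Function.Bijective (fun x : GaloisField 11 n => f.eval x) ∧
      carlitzRank (11 ^ n) f = 2 ∧
      polyWeight (11 ^ n) f = 11 ^ n - 11 ^ (n - 1) - 4 := by
  haveI : Fintype (GaloisField 11 n) := Fintype.ofFinite _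
  have hcard : Fintype.card (GaloisField 11 n) = 11 ^ n := by
    rw [← Nat.card_eq_fintype_card]
    exact GaloisField.card 11 n hn.ne'
  exact main_aux n hn hcard f hf
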